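/- Pointwise strong consistency of the empirical scaled upper tail distribution function: if G is a continuous, strictly increasing distribution function satisfying s^u > 0, then for every t > 0, \hat F^u_n(t) → F^u(t) almost surely as n → ∞. -/

import Mathlib

open MeasureTheory ProbabilityTheory Filter Set
open scoped Classical

noncomputable section

/-- The cumulative distribution function of a probability measure `μ` on `ℝ`:
`G(x) = μ((-∞, x])`. -/
def popCDF (μ : Measure ℝ) (x : ℝ) : ℝ := (μ (Iic x)).toReal

/-- The quantile function `G⁻¹(a) = inf {x : a ≤ G(x)}`. -/
def popQuantile (μ : Measure ℝ) (a : ℝ) : ℝ := sInf {x : ℝ | a ≤ popCDF μ x}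

/-- Upper quantile `η^u = G⁻¹(1 - α)`. -/
def etaU (μ : Measure ℝ) (α : ℝ) : ℝ := popQuantile μ (1 - α)

/-- Lower quantile `η^l = G⁻¹(α)`. -/
def etaL (μ : Measure ℝ) (α : ℝ) : ℝ := popQuantile μ α

/-- Conditional CDF of `X - η^u` given `X > η^u`, evaluated at `t`. -/
def tailCDFU (μ : Measure ℝ) (α t : ℝ) : ℝ :=
  (μ (Ioc (etaU μ α) (etaU μ α + t))).toReal / (μ (Ioi (etaU μ α))).toReal

/-- Conditional CDF of `η^l - X` given `X < η^l`, evaluated at `t`. -/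
def tailCDFL (μ : Measure ℝ) (α t : ℝ) : ℝ :=
  (μ (Ico (etaL μ α - t) (etaL μ α))).toReal / (μ (Iio (etaL μ α))).toReal

/-- `s^u`: the median of the conditional distribution of `X - η^u` given `X > η^u`. -/
def sU (μ : Measure ℝ) (α : ℝ) : ℝ := sInf {t : ℝ | 1 / 2 ≤ tailCDFU μ α t}

/-- `s^l`: the median of the conditional distribution of `η^l - X` given `X < η^l`. -/
def sL (μ : Measure ℝ) (α : ℝ) : ℝ := sInf {t : ℝ | 1 / 2 ≤ tailCDFL μ α t}

/-- Scaled upper tail distribution `F^u(t) = P((X - η^u)/s^u ≤ t | X > η^u)`. -/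
def FU (μ : Measure ℝ) (α t : ℝ) : ℝ := tailCDFU μ α (sU μ α * t)

/-- Scaled lower tail distribution `F^l(t) = P((η^l - X)/s^l ≤ t | X < η^l)`. -/
def FL (μ : Measure ℝ) (α t : ℝ) : ℝ := tailCDFL μ α (sL μ α * t)

/-- The reference distribution `F₀(t) = 1 - exp(-log 2 · t)`. -/
def F0 (t : ℝ) : ℝ := 1 - Real.exp (-Real.log 2 * t)

/-- The threshold `t₀ = 1 / log 2`. -/
def t0 : ℝ := 1 / Real.log 2

/-- The multiset of the first `n` observations of the process `X` at outcome `ω`. -/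
def sample {Ω : Type*} (X : ℕ → Ω → ℝ) (n : ℕ) (ω : Ω) : Multiset ℝ :=
  (Finset.range n).val.map fun i => X i ω

/-- The `k`-th order statistic (1-indexed) of a finite multiset of reals. -/
def orderStat (s : Multiset ℝ) (k : ℕ) : ℝ := (s.sort (· ≤ ·)).getD (k - 1) 0

/-- The sample median of a finite multiset of `m` reals: its `⌈m/2⌉`-th order statistic. -/
def sampleMedian (s : Multiset ℝ) : ℝ := orderStat s (Nat.ceil ((s.card : ℝ) / 2))

/-- The sample upper quantile `η̂^u_n = X_(⌈n(1-α)⌉)`. -/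
def etaUn {Ω : Type*} (X : ℕ → Ω → ℝ) (α : ℝ) (n : ℕ) (ω : Ω) : ℝ :=
  orderStat (sample X n ω) (Nat.ceil ((n : ℝ) * (1 - α)))

/-- The sample lower quantile `η̂^l_n = X_(⌈nα⌉)`. -/
def etaLn {Ω : Type*} (X : ℕ → Ω → ℝ) (α : ℝ) (n : ℕ) (ω : Ω) : ℝ :=
  orderStat (sample X n ω) (Nat.ceil ((n : ℝ) * α))

/-- The sample upper tail scale `ŝ^u_n = med{X_i - η̂^u_n : X_i > η̂^u_n}`. -/
def sUn {Ω : Type*} (X : ℕ → Ω → ℝ) (α : ℝ) (n : ℕ) (ω : Ω) : ℝ :=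
  sampleMedian (((sample X n ω).filter fun x => etaUn X α n ω < x).map
    fun x => x - etaUn X α n ω)

/-- The sample lower tail scale `ŝ^l_n = med{η̂^l_n - X_i : X_i < η̂^l_n}`. -/
def sLn {Ω : Type*} (X : ℕ → Ω → ℝ) (α : ℝ) (n : ℕ) (ω : Ω) : ℝ :=
  sampleMedian (((sample X n ω).filter fun x => x < etaLn X α n ω).map
    fun x => etaLn X α n ω - x)

/-- Empirical scaled upper tail CDF
`F̂^u_n(t) = #{i ≤ n : 0 < (X_i - η̂^u_n)/ŝ^u_n ≤ t} / #{i ≤ n : X_i > η̂^u_n}`. -/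
def FUn {Ω : Type*} (X : ℕ → Ω → ℝ) (α : ℝ) (n : ℕ) (ω : Ω) (t : ℝ) : ℝ :=
  (((sample X n ω).filter fun x =>
      0 < (x - etaUn X α n ω) / sUn X α n ω ∧ (x - etaUn X α n ω) / sUn X α n ω ≤ t).card : ℝ) /
    (((sample X n ω).filter fun x => etaUn X α n ω < x).card : ℝ)

/-- Empirical scaled lower tail CDF
`F̂^l_n(t) = #{i ≤ n : 0 < (η̂^l_n - X_i)/ŝ^l_n ≤ t} / #{i ≤ n : X_i < η̂^l_n}`. -/
def FLn {Ω : Type*} (X : ℕ → Ω → ℝ) (α : ℝ) (n : ℕ) (ω : Ω) (t : ℝ) : ℝ :=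
  (((sample X n ω).filter fun x =>
      0 < (etaLn X α n ω - x) / sLn X α n ω ∧ (etaLn X α n ω - x) / sLn X α n ω ≤ t).card : ℝ) /
    (((sample X n ω).filter fun x => x < etaLn X α n ω).card : ℝ)

/-- Proportion of flagged upper tail outliers `d̂^u_n = sup_{t ≥ t₀} {F₀(t) - F̂^u_n(t)}⁺`. -/
def dUn {Ω : Type*} (X : ℕ → Ω → ℝ) (α : ℝ) (n : ℕ) (ω : Ω) : ℝ :=
  ⨆ t : Ici t0, max 0 (F0 t - FUn X α n ω t)

/-- Proportion of flagged lower tail outliers `d̂^l_n = sup_{t ≥ t₀} {F₀(t) - F̂^l_n(t)}⁺`. -/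
def dLn {Ω : Type*} (X : ℕ → Ω → ℝ) (α : ℝ) (n : ℕ) (ω : Ω) : ℝ :=
  ⨆ t : Ici t0, max 0 (F0 t - FLn X α n ω t)

/-- Upper filtering threshold `t̂^u_n = min{t : F̂^u_n(t) ≥ 1 - d̂^u_n}`. -/
def tUn {Ω : Type*} (X : ℕ → Ω → ℝ) (α : ℝ) (n : ℕ) (ω : Ω) : ℝ :=
  sInf {t : ℝ | 1 - dUn X α n ω ≤ FUn X α n ω t}

/-- Lower filtering threshold `t̂^l_n = min{t : F̂^l_n(t) ≥ 1 - d̂^l_n}`. -/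
def tLn {Ω : Type*} (X : ℕ → Ω → ℝ) (α : ℝ) (n : ℕ) (ω : Ω) : ℝ :=
  sInf {t : ℝ | 1 - dLn X α n ω ≤ FLn X α n ω t}

/-- The filter flags observation `X_i` (among the first `n`) when
`X_i > η̂^u_n + ŝ^u_n t̂^u_n` or `X_i < η̂^l_n - ŝ^l_n t̂^l_n`. -/
def flagged {Ω : Type*} (X : ℕ → Ω → ℝ) (α : ℝ) (n i : ℕ) (ω : Ω) : Prop :=
  X i ω > etaUn X α n ω + sUn X α n ω * tUn X α n ω ∨
    X i ω < etaLn X α n ω - sLn X α n ω * tLn X α n ω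

end


/-! ### Auxiliary development -/

noncomputable section AuxDev
open Topology

/-! #### CDF facts -/

lemma popCDF_eq (μ : Measure ℝ) [IsProbabilityMeasure μ] : popCDF μ = cdf μ := by
  ext x; rw [popCDF, cdf_eq_real, measureReal_def]

lemma popCDF_Ioc (μ : Measure ℝ) [IsProbabilityMeasure μ] {a b : ℝ} (hab : a ≤ b) :
    (μ (Ioc a b)).toReal = popCDF μ b - popCDF μ a := by
  have h : Iic a ∪ Ioc a b = Iic b := Iic_union_Ioc_eq_Iic hab
  have hd : Disjoint (Iic a) (Ioc a b) := by
    simp [Set.disjoint_left]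
    intro x hx h1; linarith
  have : μ (Iic a) + μ (Ioc a b) = μ (Iic b) := by
    rw [← measure_union hd measurableSet_Ioc, h]
  rw [popCDF, popCDF, ← this, ENNReal.toReal_add (measure_ne_top μ _) (measure_ne_top μ _)]
  ring

lemma popCDF_Ioi (μ : Measure ℝ) [IsProbabilityMeasure μ] (a : ℝ) :
    (μ (Ioi a)).toReal = 1 - popCDF μ a := by
  have h : Iic a ∪ Ioi a = univ := Iic_union_Ioi
  have hd : Disjoint (Iic a) (Ioi a) := by
    simp [Set.disjoint_left]
  have : μ (Iic a) + μ (Ioi a) = 1 := by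
    rw [← measure_union hd measurableSet_Ioi, h, measure_univ]
  rw [popCDF]
  have h1 := measure_ne_top μ (Iic a)
  have h2 := measure_ne_top μ (Ioi a)
  have : (μ (Iic a)).toReal + (μ (Ioi a)).toReal = 1 := by
    rw [← ENNReal.toReal_add h1 h2, this]; simp
  linarith

lemma exists_cdf_eq (μ : Measure ℝ) [IsProbabilityMeasure μ]
    (hGcont : Continuous (popCDF μ)) {p : ℝ} (hp0 : 0 < p) (hp1 : p < 1) :
    ∃ x, popCDF μ x = p := by
  rw [popCDF_eq] at hGcont ⊢
  obtain ⟨a, ha⟩ : ∃ a, cdf μ a < p := by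
    have := tendsto_cdf_atBot μ
    have h := this.eventually (eventually_lt_nhds hp0)
    exact h.exists
  obtain ⟨b, hb⟩ : ∃ b, p < cdf μ b := by
    have := tendsto_cdf_atTop μ
    have h := this.eventually (eventually_gt_nhds hp1)
    exact h.exists
  have hab : a ≤ b := by
    by_contra hh
    push_neg at hh
    have := monotone_cdf (μ := μ) hh.le
    linarith
  have := intermediate_value_Icc hab hGcont.continuousOn (a := a) (b := b)
  have hmem : p ∈ Icc (cdf μ a) (cdf μ b) := ⟨ha.le, hb.le⟩
  obtain ⟨x, _, hx⟩ := this hmem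
  exact ⟨x, hx⟩

lemma popQuantile_cdf (μ : Measure ℝ) [IsProbabilityMeasure μ]
    (hGcont : Continuous (popCDF μ)) (hGmono : StrictMono (popCDF μ))
    {p : ℝ} (hp0 : 0 < p) (hp1 : p < 1) :
    popCDF μ (popQuantile μ p) = p := by
  obtain ⟨x0, hx0⟩ := exists_cdf_eq μ hGcont hp0 hp1
  have hset : {x : ℝ | p ≤ popCDF μ x} = Ici x0 := by
    ext x
    simp only [mem_setOf_eq, mem_Ici, ← hx0]
    exact ⟨fun h => (hGmono.le_iff_le).mp h, fun h => hGmono.monotone h⟩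
  rw [popQuantile, hset, csInf_Ici, hx0]

variable {μ : Measure ℝ} [IsProbabilityMeasure μ] {α : ℝ}

lemma cdf_etaU (hGcont : Continuous (popCDF μ)) (hGmono : StrictMono (popCDF μ))
    (hα : α ∈ Ioo (0:ℝ) (1/2)) : popCDF μ (etaU μ α) = 1 - α := by
  exact popQuantile_cdf μ hGcont hGmono (by linarith [hα.1, hα.2]) (by linarith [hα.1])

lemma cdf_sU (hGcont : Continuous (popCDF μ)) (hGmono : StrictMono (popCDF μ))
    (hα : α ∈ Ioo (0:ℝ) (1/2)) :
    popCDF μ (etaU μ α + sU μ α) = 1 - α / 2 := by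
  have hη := cdf_etaU hGcont hGmono hα
  have hα0 := hα.1
  have hα2 := hα.2
  set η := etaU μ α
  obtain ⟨x0, hx0⟩ := exists_cdf_eq μ hGcont (p := 1 - α/2) (by linarith) (by linarith)
  have hηx0 : η ≤ x0 := by
    have : popCDF μ η < popCDF μ x0 := by rw [hη, hx0]; linarith
    exact (hGmono.lt_iff_lt.mp this).le
  have hIoi : (μ (Ioi η)).toReal = α := by rw [popCDF_Ioi, hη]; ring
  have hset : {t : ℝ | 1/2 ≤ tailCDFU μ α t} = Ici (x0 - η) := by
    ext t
    simp only [mem_setOf_eq, mem_Ici]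
    constructor
    · intro h
      by_contra hlt
      push_neg at hlt
      rcases le_or_gt 0 t with ht | ht
      · have : tailCDFU μ α t = (popCDF μ (η + t) - popCDF μ η) / α := by
          rw [tailCDFU, popCDF_Ioc μ (by linarith : η ≤ η + t), hIoi]
        rw [this, hη] at h
        have hlt2 : popCDF μ (η + t) < popCDF μ x0 := hGmono (by linarith)
        rw [hx0] at hlt2
        have : (popCDF μ (η + t) - (1 - α)) / α < 1/2 := by
          rw [div_lt_iff₀ (by linarith)]; linarith
        linarith
      · have : Ioc η (η + t) = ∅ := by
          apply Ioc_eq_empty; intro hc; linarith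
        rw [tailCDFU, this] at h
        simp at h
        linarith
    · intro h
      have ht0 : 0 ≤ t := by
        by_contra hc
        push_neg at hc
        have hx0le : x0 ≤ η + t := by linarith
        have h1 : popCDF μ x0 ≤ popCDF μ (η + t) := hGmono.monotone hx0le
        have h2 : popCDF μ (η + t) < popCDF μ η := hGmono (by linarith)
        rw [hx0] at h1; rw [hη] at h2
        linarith
      have : tailCDFU μ α t = (popCDF μ (η + t) - popCDF μ η) / α := by
        rw [tailCDFU, popCDF_Ioc μ (by linarith : η ≤ η + t), hIoi]
      rw [this, hη]
      have : popCDF μ x0 ≤ popCDF μ (η + t) := hGmono.monotone (by linarith)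
      rw [hx0] at this
      rw [le_div_iff₀ (by linarith)]
      linarith
  have : sU μ α = x0 - η := by rw [sU, hset, csInf_Ici]
  rw [this]
  have : η + (x0 - η) = x0 := by ring
  rw [this, hx0]

end AuxDev

/-! #### Deterministic sample machinery -/

noncomputable section AuxDet
open Topology

/-- sample as a function of a fixed data stream -/
def smp (x : ℕ → ℝ) (n : ℕ) : Multiset ℝ := (Finset.range n).val.map x
/-- number of sample points `≤ y` -/
def scnt (x : ℕ → ℝ) (n : ℕ) (y : ℝ) : ℕ :=
  Multiset.card ((smp x n).filter (fun v => v ≤ y))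
/-- number of sample points in `(w, w + y]` -/
def tcnt (x : ℕ → ℝ) (n : ℕ) (w y : ℝ) : ℕ :=
  Multiset.card ((smp x n).filter (fun v => w < v ∧ v ≤ w + y))

lemma smp_card (x : ℕ → ℝ) (n : ℕ) : Multiset.card (smp x n) = n := by simp [smp]

lemma scnt_mono (x : ℕ → ℝ) (n : ℕ) {y y' : ℝ} (h : y ≤ y') : scnt x n y ≤ scnt x n y' :=
  Multiset.card_le_card <| Multiset.monotone_filter_right _ (fun v hv => le_trans hv h)

lemma div_le_div_of_nonneg_right' {a b c : ℝ} (h : a ≤ b) (hc : 0 ≤ c) : a / c ≤ b / c := by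
  rcases eq_or_lt_of_le hc with hc0 | hc0
  · simp [← hc0]
  · gcongr

lemma nat_lt_of_div_lt {a b n : ℕ} (h : (a:ℝ)/n < (b:ℝ)/n) : a < b := by
  by_contra hc
  push_neg at hc
  exact absurd (div_le_div_of_nonneg_right' (by exact_mod_cast hc) (Nat.cast_nonneg n)) h.not_ge

lemma eventually_lt_of_tendsto {f g : ℕ → ℝ} {c d : ℝ} (hf : Tendsto f atTop (𝓝 c))
    (hg : Tendsto g atTop (𝓝 d)) (h : c < d) : ∀ᶠ n in atTop, f n < g n := by
  obtain ⟨e, he1, he2⟩ := exists_between h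
  filter_upwards [hf.eventually (eventually_lt_nhds he1),
    hg.eventually (eventually_gt_nhds he2)] with n h1 h2
  linarith

/-- Polya-type lemma: convergence of empirical counts at a converging sequence of points. -/
lemma polya {x : ℕ → ℝ} {G : ℝ → ℝ} (hGc : Continuous G)
    (H : ∀ q : ℚ, Tendsto (fun n => (scnt x n q : ℝ) / n) atTop (𝓝 (G q)))
    {u : ℕ → ℝ} {y : ℝ} (hu : Tendsto u atTop (𝓝 y)) :
    Tendsto (fun n => (scnt x n (u n) : ℝ) / n) atTop (𝓝 (G y)) := by
  rw [Metric.tendsto_nhds]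
  intro ε hε
  obtain ⟨δ, hδ0, hδ⟩ := Metric.continuousAt_iff.1 (hGc.continuousAt (x := y)) (ε/2)
    (by linarith)
  obtain ⟨q1, hq1a, hq1b⟩ := exists_rat_btwn (show y - δ < y by linarith)
  obtain ⟨q2, hq2a, hq2b⟩ := exists_rat_btwn (show y < y + δ by linarith)
  have hGq1 : dist (G q1) (G y) < ε/2 := hδ (by rw [Real.dist_eq]; rw [abs_lt]; constructor <;> linarith)
  have hGq2 : dist (G q2) (G y) < ε/2 := hδ (by rw [Real.dist_eq]; rw [abs_lt]; constructor <;> linarith)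
  rw [Real.dist_eq, abs_lt] at hGq1 hGq2
  have h1 : ∀ᶠ n in atTop, G y - ε < (scnt x n q1 : ℝ) / n :=
    (H q1).eventually (eventually_gt_nhds (by linarith))
  have h2 : ∀ᶠ n in atTop, (scnt x n q2 : ℝ) / n < G y + ε :=
    (H q2).eventually (eventually_lt_nhds (by linarith))
  have h3 : ∀ᶠ n in atTop, u n ∈ Ioo (q1 : ℝ) q2 :=
    hu (Ioo_mem_nhds hq1b hq2a)
  filter_upwards [h1, h2, h3] with n hn1 hn2 hn3
  have hm1 : (scnt x n q1 : ℝ) / n ≤ (scnt x n (u n) : ℝ) / n :=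
    div_le_div_of_nonneg_right' (by exact_mod_cast scnt_mono x n hn3.1.le) (Nat.cast_nonneg n)
  have hm2 : (scnt x n (u n) : ℝ) / n ≤ (scnt x n q2 : ℝ) / n :=
    div_le_div_of_nonneg_right' (by exact_mod_cast scnt_mono x n hn3.2.le) (Nat.cast_nonneg n)
  rw [Real.dist_eq, abs_lt]
  constructor <;> linarith

/-! #### Order statistics -/

lemma sorted_getD_le_iff {l : List ℝ} (hl : l.Pairwise (· ≤ ·)) {k : ℕ}
    (hk1 : 1 ≤ k) (hk2 : k ≤ l.length) (y : ℝ) :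
    l.getD (k-1) 0 ≤ y ↔ k ≤ (l.filter (fun x => x ≤ y)).length := by
  have hlt : k - 1 < l.length := by omega
  rw [List.getD_eq_getElem l 0 hlt]
  have hsplit : l = l.take (k-1) ++ l.drop (k-1) := (List.take_append_drop _ l).symm
  have hdrop : l.drop (k-1) = l[k-1] :: l.drop k := by
    have hk' : k - 1 + 1 = k := by omega
    rw [List.drop_eq_getElem_cons hlt, hk']
  have hlenflt : (l.filter (fun x => x ≤ y)).length
      = (l.take (k-1) |>.filter (fun x => x ≤ y)).length
        + ((l[k-1] :: l.drop k).filter (fun x => x ≤ y)).length := by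
    conv_lhs => rw [hsplit]
    rw [List.filter_append, List.length_append, hdrop]
  constructor
  · intro h
    have htake : ∀ x ∈ l.take (k-1), x ≤ y := by
      intro x hx
      have hmem : l[k-1] ∈ l.drop (k-1) := by rw [hdrop]; exact List.mem_cons_self
      exact le_trans (hl.rel_of_mem_take_of_mem_drop hx hmem) h
    have h1 : (l.take (k-1) |>.filter (fun x => x ≤ y)).length = k - 1 := by
      rw [List.filter_eq_self.mpr (by intro x hx; exact decide_eq_true (htake x hx)),
        List.length_take]
      omega
    have h2 : 1 ≤ ((l[k-1] :: l.drop k).filter (fun x => x ≤ y)).length := by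
      rw [List.filter_cons, if_pos (decide_eq_true h)]
      simp
    omega
  · intro h
    by_contra hc
    push_neg at hc
    have hdropk : ∀ x ∈ l.drop k, ¬ (x ≤ y) := by
      intro x hx
      have hmem : l[k-1] ∈ l.take k := by
        have h1 : k - 1 < (l.take k).length := by rw [List.length_take]; omega
        simpa using List.getElem_mem h1
      have := hl.rel_of_mem_take_of_mem_drop hmem hx
      intro hxy
      linarith
    have h2 : ((l[k-1] :: l.drop k).filter (fun x => x ≤ y)).length = 0 := by
      rw [List.filter_cons, if_neg (by simpa using hc.not_ge), List.filter_eq_nil_iff.mpr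
        (by intro x hx; simpa using hdropk x hx)]
      simp
    have h1 : (l.take (k-1) |>.filter (fun x => x ≤ y)).length ≤ k - 1 := by
      calc _ ≤ (l.take (k-1)).length := List.length_filter_le _ _
      _ ≤ k - 1 := by rw [List.length_take]; omega
    omega

lemma orderStat_le_iff {s : Multiset ℝ} {k : ℕ} (hk1 : 1 ≤ k) (hk2 : k ≤ Multiset.card s)
    (y : ℝ) :
    orderStat s k ≤ y ↔ k ≤ Multiset.card (s.filter (fun x => x ≤ y)) := by
  have hs : ↑(s.sort (· ≤ ·)) = s := s.sort_eq _
  have hlen : (s.sort (· ≤ ·)).length = Multiset.card s := s.length_sort _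
  have key : Multiset.card (s.filter (fun x => x ≤ y))
      = ((s.sort (· ≤ ·)).filter (fun x => decide (x ≤ y))).length := by
    conv_lhs => rw [← hs, Multiset.filter_coe, Multiset.coe_card]
  rw [orderStat, sorted_getD_le_iff (s.pairwise_sort _) hk1 (by omega) y, key]

/-! #### Counting identities -/

lemma tail_filter_card (x : ℕ → ℝ) (n : ℕ) (w y : ℝ) :
    Multiset.card (((((smp x n).filter (fun v => w < v)).map (fun v => v - w)).filter
      (fun v => v ≤ y))) = tcnt x n w y := by
  rw [tcnt, ← Multiset.countP_eq_card_filter, Multiset.countP_map,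
    ← Multiset.countP_eq_card_filter, Multiset.countP_filter, ← Multiset.countP_eq_card_filter]
  apply Multiset.countP_congr rfl
  intro v _
  rw [eq_iff_iff]
  exact ⟨fun h => ⟨h.2, by linarith [h.1]⟩, fun h => ⟨by linarith [h.2], h.1⟩⟩

lemma scnt_add_tcnt (x : ℕ → ℝ) (n : ℕ) (w : ℝ) {y : ℝ} (hy : 0 ≤ y) :
    scnt x n w + tcnt x n w y = scnt x n (w + y) := by
  rw [scnt, scnt, tcnt, ← Multiset.countP_eq_card_filter, ← Multiset.countP_eq_card_filter,
    ← Multiset.countP_eq_card_filter,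
    Multiset.countP_eq_countP_filter_add (smp x n) (fun v => v ≤ w + y) (fun v => v ≤ w),
    Multiset.countP_filter, Multiset.countP_filter]
  congr 1
  · apply Multiset.countP_congr rfl
    intro v _
    rw [eq_iff_iff]
    exact ⟨fun h => ⟨by linarith, h⟩, fun h => h.2⟩
  · apply Multiset.countP_congr rfl
    intro v _
    rw [eq_iff_iff]
    exact ⟨fun h => ⟨h.2, not_le.2 h.1⟩, fun h => ⟨not_le.1 h.2, h.1⟩⟩

lemma scnt_add_gtcard (x : ℕ → ℝ) (n : ℕ) (w : ℝ) :
    scnt x n w + Multiset.card ((smp x n).filter (fun v => w < v)) = n := by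
  rw [scnt, ← Multiset.card_add]
  have h1 : (smp x n).filter (fun v => w < v) = (smp x n).filter (fun v => ¬ (v ≤ w)) :=
    Multiset.filter_congr (fun v _ => by
      constructor <;> intro h <;> [exact not_le.2 h; exact not_le.1 h])
  rw [h1, Multiset.filter_add_not]
  simp [smp]

/-! #### Convergence of sample quantile, counts, and scale -/

/-- the sequence of sample upper quantiles -/
def etaS (x : ℕ → ℝ) (α : ℝ) (n : ℕ) : ℝ := orderStat (smp x n) (⌈(n:ℝ)*(1-α)⌉₊)
/-- number of strict exceedances -/
def mc (x : ℕ → ℝ) (α : ℝ) (n : ℕ) : ℕ :=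
  Multiset.card ((smp x n).filter (fun v => etaS x α n < v))
/-- the multiset of shifted exceedances -/
def tailM (x : ℕ → ℝ) (α : ℝ) (n : ℕ) : Multiset ℝ :=
  ((smp x n).filter (fun v => etaS x α n < v)).map (fun v => v - etaS x α n)
/-- the sample upper tail scale -/
def shat (x : ℕ → ℝ) (α : ℝ) (n : ℕ) : ℝ := orderStat (tailM x α n) ⌈(mc x α n : ℝ)/2⌉₊

section Det
variable {x : ℕ → ℝ} {G : ℝ → ℝ} {α η s' : ℝ}

lemma k_div_tendsto (hα : α ∈ Ioo (0:ℝ) (1/2)) :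
    Tendsto (fun n : ℕ => (⌈(n:ℝ)*(1-α)⌉₊ : ℝ)/n) atTop (𝓝 (1-α)) := by
  have h1 : ∀ᶠ n : ℕ in atTop, (1-α) ≤ (⌈(n:ℝ)*(1-α)⌉₊ : ℝ)/n := by
    filter_upwards [eventually_ge_atTop 1] with n hn
    have hn' : (0:ℝ) < n := by exact_mod_cast hn
    rw [le_div_iff₀ hn']
    calc (1-α) * n = (n:ℝ)*(1-α) := by ring
    _ ≤ _ := Nat.le_ceil _
  have h2 : ∀ᶠ n : ℕ in atTop, (⌈(n:ℝ)*(1-α)⌉₊ : ℝ)/n ≤ (1-α) + 1/n := by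
    filter_upwards [eventually_ge_atTop 1] with n hn
    have hn' : (0:ℝ) < n := by exact_mod_cast hn
    rw [div_le_iff₀ hn']
    have := (Nat.ceil_lt_add_one
      (mul_nonneg hn'.le (by linarith [hα.2]) : (0:ℝ) ≤ (n:ℝ)*(1-α))).le
    calc (⌈(n:ℝ)*(1-α)⌉₊ : ℝ) ≤ (n:ℝ)*(1-α) + 1 := this
    _ = ((1-α) + 1/n) * n := by field_simp
  have hub : Tendsto (fun n : ℕ => (1-α) + 1/n) atTop (𝓝 ((1-α) + 0)) :=
    tendsto_const_nhds.add tendsto_one_div_atTop_nhds_zero_nat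
  rw [add_zero] at hub
  exact tendsto_of_tendsto_of_tendsto_of_le_of_le' tendsto_const_nhds hub h1 h2

lemma eta_tendsto (hGc : Continuous G) (hGm : StrictMono G)
    (hα : α ∈ Ioo (0:ℝ) (1/2)) (hGη : G η = 1 - α)
    (H : ∀ q : ℚ, Tendsto (fun n => (scnt x n q : ℝ) / n) atTop (𝓝 (G q))) :
    Tendsto (etaS x α) atTop (𝓝 η) := by
  have hα0 := hα.1; have hα2 := hα.2
  have hk := k_div_tendsto hα
  have hkn : ∀ᶠ n : ℕ in atTop, 1 ≤ ⌈(n:ℝ)*(1-α)⌉₊ ∧ ⌈(n:ℝ)*(1-α)⌉₊ ≤ n := by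
    filter_upwards [eventually_ge_atTop 1] with n hn
    have hn' : (0:ℝ) < n := by exact_mod_cast hn
    constructor
    · exact Nat.one_le_ceil_iff.mpr (mul_pos hn' (by linarith [hα.2]))
    · exact Nat.ceil_le.mpr (by nlinarith)
  rw [tendsto_order]
  constructor
  · intro a ha
    have hGa : G a < 1 - α := by rw [← hGη]; exact hGm ha
    have hca : Tendsto (fun n => (scnt x n a : ℝ)/n) atTop (𝓝 (G a)) :=
      polya hGc H tendsto_const_nhds
    filter_upwards [eventually_lt_of_tendsto hca hk hGa, hkn] with n h1 h2
    by_contra hc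
    push_neg at hc
    have := (orderStat_le_iff h2.1 (by rw [smp_card]; exact h2.2) a).1 hc
    have hlt := nat_lt_of_div_lt h1
    rw [← scnt] at this
    omega
  · intro b hb
    set b' := (η + b)/2 with hb'
    have hb'1 : η < b' := by rw [hb']; linarith
    have hb'2 : b' < b := by rw [hb']; linarith
    have hGb : 1 - α < G b' := by rw [← hGη]; exact hGm hb'1
    have hcb : Tendsto (fun n => (scnt x n b' : ℝ)/n) atTop (𝓝 (G b')) :=
      polya hGc H tendsto_const_nhds
    filter_upwards [eventually_lt_of_tendsto hk hcb hGb, hkn] with n h1 h2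
    have hlt := nat_lt_of_div_lt h1
    have : etaS x α n ≤ b' := by
      rw [etaS, orderStat_le_iff h2.1 (by rw [smp_card]; exact h2.2) b']
      rw [← scnt]
      omega
    linarith

lemma mc_div_tendsto (hGc : Continuous G) (hGm : StrictMono G)
    (hα : α ∈ Ioo (0:ℝ) (1/2)) (hGη : G η = 1 - α)
    (H : ∀ q : ℚ, Tendsto (fun n => (scnt x n q : ℝ) / n) atTop (𝓝 (G q))) :
    Tendsto (fun n => (mc x α n : ℝ)/n) atTop (𝓝 α) := by
  have hscnt : Tendsto (fun n => (scnt x n (etaS x α n) : ℝ)/n) atTop (𝓝 (G η)) :=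
    polya hGc H (eta_tendsto hGc hGm hα hGη H)
  have h2 : Tendsto (fun n => 1 - (scnt x n (etaS x α n) : ℝ)/n) atTop (𝓝 (1 - G η)) :=
    tendsto_const_nhds.sub hscnt
  rw [hGη] at h2
  have h3 : (1 : ℝ) - (1 - α) = α := by ring
  rw [h3] at h2
  apply h2.congr'
  filter_upwards [eventually_ge_atTop 1] with n hn
  have hn' : (0:ℝ) < n := by exact_mod_cast hn
  have := scnt_add_gtcard x n (etaS x α n)
  have hcast : (scnt x n (etaS x α n) : ℝ) + (mc x α n : ℝ) = n := by
    exact_mod_cast congrArg Nat.cast this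
  have hc : (mc x α n : ℝ) = n - (scnt x n (etaS x α n) : ℝ) := by linarith
  rw [hc, sub_div, div_self (ne_of_gt hn')]

lemma mc_pos (hGc : Continuous G) (hGm : StrictMono G)
    (hα : α ∈ Ioo (0:ℝ) (1/2)) (hGη : G η = 1 - α)
    (H : ∀ q : ℚ, Tendsto (fun n => (scnt x n q : ℝ) / n) atTop (𝓝 (G q))) :
    ∀ᶠ n in atTop, 1 ≤ mc x α n := by
  filter_upwards [(mc_div_tendsto hGc hGm hα hGη H).eventually
    (eventually_gt_nhds hα.1)] with n hn
  by_contra hc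
  push_neg at hc
  have h0 : mc x α n = 0 := by omega
  rw [h0] at hn
  have : α < 0 := by simpa using hn
  linarith [hα.1]

lemma j_div_tendsto (hGc : Continuous G) (hGm : StrictMono G)
    (hα : α ∈ Ioo (0:ℝ) (1/2)) (hGη : G η = 1 - α)
    (H : ∀ q : ℚ, Tendsto (fun n => (scnt x n q : ℝ) / n) atTop (𝓝 (G q))) :
    Tendsto (fun n => (⌈(mc x α n : ℝ)/2⌉₊ : ℝ)/n) atTop (𝓝 (α/2)) := by
  have hm := mc_div_tendsto hGc hGm hα hGη H
  have hlow : Tendsto (fun n => ((mc x α n : ℝ)/n)/2) atTop (𝓝 (α/2)) := hm.div_const 2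
  have hup : Tendsto (fun n => ((mc x α n : ℝ)/n)/2 + 1/n) atTop (𝓝 (α/2 + 0)) :=
    hlow.add tendsto_one_div_atTop_nhds_zero_nat
  rw [add_zero] at hup
  refine tendsto_of_tendsto_of_tendsto_of_le_of_le' hlow hup ?_ ?_
  · filter_upwards [] with n
    have he : (mc x α n : ℝ)/n/2 = ((mc x α n : ℝ)/2)/n := by ring
    rw [he]
    exact div_le_div_of_nonneg_right' (Nat.le_ceil _) (Nat.cast_nonneg n)
  · filter_upwards [] with n
    have h1 : (⌈(mc x α n : ℝ)/2⌉₊ : ℝ) ≤ (mc x α n : ℝ)/2 + 1 :=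
      (Nat.ceil_lt_add_one (by positivity)).le
    calc (⌈(mc x α n : ℝ)/2⌉₊ : ℝ)/n ≤ ((mc x α n : ℝ)/2 + 1)/n :=
          div_le_div_of_nonneg_right' h1 (Nat.cast_nonneg n)
    _ = (mc x α n : ℝ)/n/2 + 1/n := by ring

lemma tcnt_div_tendsto (hGc : Continuous G)
    (H : ∀ q : ℚ, Tendsto (fun n => (scnt x n q : ℝ) / n) atTop (𝓝 (G q)))
    {w : ℕ → ℝ} (hw : Tendsto w atTop (𝓝 η)) {yn : ℕ → ℝ} {y : ℝ}
    (hyn : Tendsto yn atTop (𝓝 y)) (hy0 : ∀ᶠ n in atTop, 0 ≤ yn n) :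
    Tendsto (fun n => (tcnt x n (w n) (yn n) : ℝ)/n) atTop (𝓝 (G (η+y) - G η)) := by
  have hA := polya hGc H (hw.add hyn)
  have hB := polya hGc H hw
  apply (hA.sub hB).congr'
  filter_upwards [hy0] with n hy
  have h := scnt_add_tcnt x n (w n) hy
  have hcast : (scnt x n (w n) : ℝ) + (tcnt x n (w n) (yn n) : ℝ)
      = (scnt x n (w n + yn n) : ℝ) := by exact_mod_cast congrArg Nat.cast h
  have : (tcnt x n (w n) (yn n) : ℝ) = (scnt x n (w n + yn n) : ℝ) - scnt x n (w n) := by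
    linarith
  rw [this, sub_div]

lemma shat_le_iff (n : ℕ) (hmc : 1 ≤ mc x α n) (y : ℝ) :
    shat x α n ≤ y ↔ ⌈(mc x α n : ℝ)/2⌉₊ ≤ tcnt x n (etaS x α n) y := by
  have hcard : Multiset.card (tailM x α n) = mc x α n := by
    rw [tailM, Multiset.card_map, mc]
  have hj1 : 1 ≤ ⌈(mc x α n : ℝ)/2⌉₊ := by
    apply Nat.one_le_ceil_iff.mpr
    have : (0:ℝ) < mc x α n := by exact_mod_cast hmc
    positivity
  have hj2 : ⌈(mc x α n : ℝ)/2⌉₊ ≤ Multiset.card (tailM x α n) := by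
    rw [hcard]
    apply Nat.ceil_le.mpr
    have : (0:ℝ) ≤ mc x α n := Nat.cast_nonneg _
    linarith
  rw [shat, orderStat_le_iff hj1 hj2 y, tailM, tail_filter_card]

lemma shat_tendsto (hGc : Continuous G) (hGm : StrictMono G)
    (hα : α ∈ Ioo (0:ℝ) (1/2)) (hGη : G η = 1 - α) (hGs : G (η + s') = 1 - α/2)
    (hs' : 0 < s')
    (H : ∀ q : ℚ, Tendsto (fun n => (scnt x n q : ℝ) / n) atTop (𝓝 (G q))) :
    Tendsto (shat x α) atTop (𝓝 s') := by
  have heta : Tendsto (etaS x α) atTop (𝓝 η) := eta_tendsto hGc hGm hα hGη H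
  have hj := j_div_tendsto hGc hGm hα hGη H
  have hmc1 := mc_pos hGc hGm hα hGη H
  rw [tendsto_order]
  constructor
  · intro a ha
    set a' := max a (s'/2) with ha'
    have ha'0 : 0 < a' := lt_of_lt_of_le (half_pos hs') (le_max_right _ _)
    have ha's : a' < s' := max_lt ha (by linarith)
    have haa' : a ≤ a' := le_max_left _ _
    have htc := tcnt_div_tendsto hGc H heta (tendsto_const_nhds (x := a'))
      (Eventually.of_forall fun n => ha'0.le)
    have hlim : G (η + a') - G η < α/2 := by
      have : G (η + a') < G (η + s') := hGm (by linarith)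
      rw [hGs] at this; rw [hGη]; linarith
    filter_upwards [eventually_lt_of_tendsto htc hj hlim, hmc1] with n h1 h2
    have hlt := nat_lt_of_div_lt h1
    have : ¬ (shat x α n ≤ a') := by
      rw [shat_le_iff n h2 a']
      omega
    push_neg at this
    exact lt_of_le_of_lt haa' this
  · intro b hb
    set b' := (s' + b)/2 with hb'
    have hb's : s' < b' := by rw [hb']; linarith
    have hb'b : b' < b := by rw [hb']; linarith
    have htc := tcnt_div_tendsto hGc H heta (tendsto_const_nhds (x := b'))
      (Eventually.of_forall fun n => by linarith)
    have hlim : α/2 < G (η + b') - G η := by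
      have : G (η + s') < G (η + b') := hGm (by linarith)
      rw [hGs] at this; rw [hGη]; linarith
    filter_upwards [eventually_lt_of_tendsto hj htc hlim, hmc1] with n h1 h2
    have hlt := nat_lt_of_div_lt h1
    have : shat x α n ≤ b' := by
      rw [shat_le_iff n h2 b']
      omega
    linarith

lemma FUn_det (hGc : Continuous G) (hGm : StrictMono G)
    (hα : α ∈ Ioo (0:ℝ) (1/2)) (hGη : G η = 1 - α) (hGs : G (η + s') = 1 - α/2)
    (hs' : 0 < s')
    (H : ∀ q : ℚ, Tendsto (fun n => (scnt x n q : ℝ) / n) atTop (𝓝 (G q)))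
    {t : ℝ} (ht : 0 < t) :
    Tendsto (fun n => (Multiset.card ((smp x n).filter
        (fun v => 0 < (v - etaS x α n)/(shat x α n) ∧ (v - etaS x α n)/(shat x α n) ≤ t)) : ℝ)
      / (mc x α n : ℝ)) atTop (𝓝 ((G (η + s'*t) - G η)/α)) := by
  have heta : Tendsto (etaS x α) atTop (𝓝 η) := eta_tendsto hGc hGm hα hGη H
  have hsh := shat_tendsto hGc hGm hα hGη hGs hs' H
  have hshpos : ∀ᶠ n in atTop, 0 < shat x α n := hsh.eventually (eventually_gt_nhds hs')
  have hyn : Tendsto (fun n => shat x α n * t) atTop (𝓝 (s'*t)) := hsh.mul_const t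
  have hy0 : ∀ᶠ n in atTop, 0 ≤ shat x α n * t := by
    filter_upwards [hshpos] with n hn; positivity
  have hN := tcnt_div_tendsto hGc H heta hyn hy0
  have hm := mc_div_tendsto hGc hGm hα hGη H
  have hdiv := hN.div hm (ne_of_gt hα.1)
  apply hdiv.congr'
  filter_upwards [hshpos, mc_pos hGc hGm hα hGη H, eventually_ge_atTop 1] with n hpos hmc hn
  have hn' : (0:ℝ) < n := by exact_mod_cast hn
  have hmc' : (0:ℝ) < mc x α n := by exact_mod_cast hmc
  have hcard : (smp x n).filter
      (fun v => 0 < (v - etaS x α n)/(shat x α n) ∧ (v - etaS x α n)/(shat x α n) ≤ t)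
      = (smp x n).filter (fun v => etaS x α n < v ∧ v ≤ etaS x α n + shat x α n * t) := by
    apply Multiset.filter_congr
    intro v _
    constructor
    · rintro ⟨h1, h2⟩
      have hv : 0 < v - etaS x α n := by
        by_contra hc
        push_neg at hc
        have : (v - etaS x α n)/(shat x α n) ≤ 0 :=
          div_nonpos_iff.2 (Or.inr ⟨hc, hpos.le⟩)
        linarith
      refine ⟨by linarith, ?_⟩
      rw [div_le_iff₀ hpos] at h2
      linarith
    · rintro ⟨h1, h2⟩
      constructor
      · apply div_pos (by linarith) hpos
      · rw [div_le_iff₀ hpos]; linarith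
  rw [hcard]
  have : Multiset.card ((smp x n).filter
      (fun v => etaS x α n < v ∧ v ≤ etaS x α n + shat x α n * t))
      = tcnt x n (etaS x α n) (shat x α n * t) := rfl
  rw [this]
  simp only [Pi.div_apply]
  have h1 : (n:ℝ) ≠ 0 := ne_of_gt hn'
  have h2 : (mc x α n : ℝ) ≠ 0 := ne_of_gt hmc'
  field_simp

end Det
end AuxDet

/-! #### Strong law of large numbers for the empirical counts -/

noncomputable section AuxSLLN
open Topology

lemma scnt_eq_sum (x : ℕ → ℝ) (n : ℕ) (y : ℝ) :
    (scnt x n y : ℝ) = ∑ i ∈ Finset.range n, (Iic y).indicator (fun _ => (1:ℝ)) (x i) := by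
  rw [scnt, smp, ← Multiset.countP_eq_card_filter, Multiset.countP_map]
  have : ∀ i, (Iic y).indicator (fun _ => (1:ℝ)) (x i) = if x i ≤ y then 1 else 0 := by
    intro i; by_cases h : x i ≤ y <;> simp [indicator, h]
  simp only [this]
  rw [Finset.sum_boole]
  norm_num
  rfl

theorem slln_cnt {Ω : Type*} [MeasurableSpace Ω] (P : Measure Ω) [IsProbabilityMeasure P]
    (μ : Measure ℝ) [IsProbabilityMeasure μ]
    (X : ℕ → Ω → ℝ) (hXmeas : ∀ i, Measurable (X i))
    (hindep : iIndepFun X P)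
    (hident : ∀ i, Measure.map (X i) P = μ) :
    ∀ᵐ ω ∂P, ∀ q : ℚ, Tendsto (fun n => (scnt (fun i => X i ω) n q : ℝ) / n) atTop
      (𝓝 (popCDF μ q)) := by
  rw [ae_all_iff]
  intro q
  set f : ℝ → ℝ := (Iic (q : ℝ)).indicator (fun _ => (1:ℝ)) with hf
  have hfm : Measurable f := measurable_const.indicator measurableSet_Iic
  have hfb : ∀ z : ℝ, ‖f z‖ ≤ 1 := by
    intro z
    by_cases h : z ∈ Iic (q:ℝ) <;> simp [hf, indicator, h]
  have hint : Integrable (f ∘ X 0) P := by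
    refine Integrable.mono' (integrable_const 1) ((hfm.comp (hXmeas 0)).aestronglyMeasurable) ?_
    exact Eventually.of_forall fun ω => hfb _
  have hpair : Pairwise (Function.onFun (IndepFun · · P) (fun i => f ∘ X i)) := by
    intro i j hij
    exact (hindep.indepFun hij).comp hfm hfm
  have hid : ∀ i, IdentDistrib (f ∘ X i) (f ∘ X 0) P P := by
    intro i
    have hXi : IdentDistrib (X i) (X 0) P P :=
      ⟨(hXmeas i).aemeasurable, (hXmeas 0).aemeasurable, by rw [hident i, hident 0]⟩
    exact hXi.comp hfm
  have hmean : P[f ∘ X 0] = popCDF μ (q : ℝ) := by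
    have h1 : ∫ z, f z ∂(Measure.map (X 0) P) = ∫ ω, f (X 0 ω) ∂P :=
      integral_map (hXmeas 0).aemeasurable hfm.aestronglyMeasurable
    rw [hident 0] at h1
    have h2 : P[f ∘ X 0] = ∫ ω, f (X 0 ω) ∂P := rfl
    rw [h2, ← h1, hf, integral_indicator_const (1:ℝ) measurableSet_Iic]
    simp [popCDF, measureReal_def]
  have := strong_law_ae_real (fun i => f ∘ X i) hint hpair hid
  rw [hmean] at this
  filter_upwards [this] with ω hω
  have : (fun n => (scnt (fun i => X i ω) n q : ℝ) / n)
      = fun n : ℕ => (∑ i ∈ Finset.range n, (f ∘ X i) ω) / n := by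
    ext n
    rw [scnt_eq_sum]
    rfl
  rw [this]
  exact hω

end AuxSLLN

/-- **Pointwise strong consistency of the empirical scaled upper tail distribution
function.** If `G` is a continuous, strictly increasing distribution function with
`s^u > 0`, then for an i.i.d. sample from `G` and every `t > 0`,
`F̂^u_n(t) → F^u(t)` almost surely as `n → ∞`. -/
theorem empirical_scaled_upper_tail_consistency
    {Ω : Type*} [MeasurableSpace Ω] (P : Measure Ω) [IsProbabilityMeasure P]
    (μ : Measure ℝ) [IsProbabilityMeasure μ]
    (hGcont : Continuous (popCDF μ)) (hGmono : StrictMono (popCDF μ))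
    (α : ℝ) (hα : α ∈ Ioo (0 : ℝ) (1 / 2))
    (hsU : 0 < sU μ α)
    (X : ℕ → Ω → ℝ) (hXmeas : ∀ i, Measurable (X i))
    (hindep : iIndepFun X P)
    (hident : ∀ i, Measure.map (X i) P = μ) :
    ∀ t > (0 : ℝ),
      ∀ᵐ ω ∂P, Tendsto (fun n => FUn X α n ω t) atTop (nhds (FU μ α t)) := by
  intro t ht
  have hα0 := hα.1
  have hGη := cdf_etaU hGcont hGmono hα
  have hGs := cdf_sU hGcont hGmono hα
  filter_upwards [slln_cnt P μ X hXmeas hindep hident] with ω Hω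
  set xω : ℕ → ℝ := fun i => X i ω with hxω
  have key := FUn_det (x := xω) hGcont hGmono hα hGη hGs hsU Hω ht
  have hIoi : (μ (Ioi (etaU μ α))).toReal = α := by rw [popCDF_Ioi, hGη]; ring
  have hFU : FU μ α t
      = (popCDF μ (etaU μ α + sU μ α * t) - popCDF μ (etaU μ α)) / α := by
    rw [FU, tailCDFU, popCDF_Ioc μ (by nlinarith : etaU μ α ≤ etaU μ α + sU μ α * t), hIoi]
  rw [hFU]
  apply Filter.Tendsto.congr' _ key
  filter_upwards [] with n
  have hc : Multiset.card (tailM xω α n) = mc xω α n := by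
    rw [tailM, Multiset.card_map, mc]
  have hsUn : sUn X α n ω = shat xω α n := by
    show orderStat (tailM xω α n) (Nat.ceil ((Multiset.card (tailM xω α n) : ℝ)/2)) = _
    rw [hc]
    rfl
  show _ = FUn X α n ω t
  rw [FUn, hsUn]
  rfl
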